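/- Let A ∈ ℝ^{n×n} be non-diagonal symmetric and Â = (1/N) Σ_{k=1}^N A w_k w_k^T with independent Rademacher vectors w_k. Then for each index i and every t > 0, P[|Â_{ii} − a_{ii}| ≥ t] ≤ 2·exp(−N t² / (2(‖a_i‖₂² − a_{ii}²))), where a_i is the i-th row of A. -/

import Mathlib

open MeasureTheory ProbabilityTheory
open Real ENNReal

/-- The distribution of a Rademacher random variable: `±1` with probability `1/2` each. -/
noncomputable def rademacherMeasure : Measure ℝ :=
  (2⁻¹ : ENNReal) • Measure.dirac (1 : ℝ) + (2⁻¹ : ENNReal) • Measure.dirac (-1 : ℝ)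

lemma lintegral_rademacher (f : ℝ → ℝ≥0∞) :
    ∫⁻ x, f x ∂rademacherMeasure = 2⁻¹ * f 1 + 2⁻¹ * f (-1) := by
  simp [rademacherMeasure, lintegral_add_measure, lintegral_smul_measure, lintegral_dirac]

lemma rademacher_compl : rademacherMeasure ({1, -1} : Set ℝ)ᶜ = 0 := by
  simp [rademacherMeasure, Measure.dirac_apply]

lemma lintegral_prod_indep {ι Ω : Type*} [MeasurableSpace Ω] {μ : Measure Ω}
    [IsProbabilityMeasure μ] {G : ι → Ω → ℝ≥0∞} (hm : ∀ i, Measurable (G i))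
    (h : iIndepFun G μ) (s : Finset ι) :
    ∫⁻ ω, ∏ i ∈ s, G i ω ∂μ = ∏ i ∈ s, ∫⁻ ω, G i ω ∂μ := by
  classical
  induction s using Finset.induction with
  | empty => simp
  | @insert a s ha ih =>
    rw [Finset.prod_insert ha]
    have hind : IndepFun (G a) (∏ j ∈ s, G j) μ :=
      (h.indepFun_finset_prod_of_notMem hm ha).symm
    have hind' : IndepFun (G a) (fun ω => ∏ i ∈ s, G i ω) μ := by
      have : (∏ j ∈ s, G j) = fun ω => ∏ i ∈ s, G i ω := by
        funext ω; simp [Finset.prod_apply]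
      rwa [this] at hind
    have key := lintegral_mul_eq_lintegral_mul_lintegral_of_indepFun (hm a)
        (by exact s.measurable_prod (fun i _ => hm i) : Measurable (fun ω => ∏ i ∈ s, G i ω)) hind'
    calc ∫⁻ ω, ∏ i ∈ insert a s, G i ω ∂μ
        = ∫⁻ ω, G a ω * ∏ i ∈ s, G i ω ∂μ := by
          simp [Finset.prod_insert ha]
      _ = (∫⁻ ω, G a ω ∂μ) * ∫⁻ ω, ∏ i ∈ s, G i ω ∂μ := key
      _ = (∫⁻ ω, G a ω ∂μ) * ∏ i ∈ s, ∫⁻ ω, G i ω ∂μ := by rw [ih]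

noncomputable def Fc {n N : ℕ} (i : Fin n) (a : Fin n → ℝ) (l : ℝ) (s : Finset (Fin N)) :
    Fin N × Fin n → ℝ → ℝ≥0∞ := fun p u =>
  if p.2 = i then (if u = (if p.1 ∈ s then (1:ℝ) else -1) then 1 else 0)
  else ENNReal.ofReal (exp ((if p.1 ∈ s then l else -l) * a p.2 * u))

lemma Fc_meas {n N : ℕ} (i : Fin n) (a : Fin n → ℝ) (l : ℝ) (s : Finset (Fin N))
    (p : Fin N × Fin n) : Measurable (Fc i a l s p) := by
  unfold Fc
  rcases eq_or_ne p.2 i with h | h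
  · simp only [h, ite_true, if_pos]
    exact Measurable.ite (by simp [Set.setOf_eq_eq_singleton]) measurable_const measurable_const
  · simp only [h, ite_false, if_neg, if_false]
    exact ENNReal.measurable_ofReal.comp
      (Real.measurable_exp.comp (measurable_const.mul measurable_id))

lemma pointwise_identity {n N : ℕ} (i : Fin n) (a : Fin n → ℝ) (l : ℝ)
    (x : Fin N × Fin n → ℝ) (hx : ∀ p, x p = 1 ∨ x p = -1) :
    ENNReal.ofReal (exp (l * ∑ k, ((∑ j, a j * x (k, j)) * x (k, i) - a i)))
      = ∑ s : Finset (Fin N), ∏ p : Fin N × Fin n, Fc i a l s p (x p) := by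
  classical
  set u : Fin N → ℝ≥0∞ := fun k =>
    (if x (k, i) = 1 then 1 else 0) *
      ∏ j ∈ Finset.univ.erase i, ENNReal.ofReal (exp (l * (a j * x (k, j)))) with hu
  set v : Fin N → ℝ≥0∞ := fun k =>
    (if x (k, i) = -1 then 1 else 0) *
      ∏ j ∈ Finset.univ.erase i, ENNReal.ofReal (exp (l * -(a j * x (k, j)))) with hv
  have key : ∀ k, ENNReal.ofReal (exp (l * ((∑ j, a j * x (k, j)) * x (k, i) - a i)))
      = u k + v k := by
    intro k
    rcases hx (k, i) with h1 | h1
    · have h2 : x (k, i) ≠ -1 := by rw [h1]; norm_num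
      have hsum : (∑ j, a j * x (k, j)) * x (k, i) - a i
          = ∑ j ∈ Finset.univ.erase i, a j * x (k, j) := by
        rw [h1, mul_one, ← Finset.sum_erase_add _ _ (Finset.mem_univ i), h1]
        ring
      have hu1 : u k = ∏ j ∈ Finset.univ.erase i,
          ENNReal.ofReal (exp (l * (a j * x (k, j)))) := by
        simp [hu, h1]
      have hv1 : v k = 0 := by norm_num [hv, h1]
      rw [hsum, Finset.mul_sum, Real.exp_sum,
        ENNReal.ofReal_prod_of_nonneg (fun j _ => (Real.exp_pos _).le), hu1, hv1, add_zero]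
    · have h2 : x (k, i) ≠ 1 := by rw [h1]; norm_num
      have hsum : (∑ j, a j * x (k, j)) * x (k, i) - a i
          = ∑ j ∈ Finset.univ.erase i, -(a j * x (k, j)) := by
        rw [h1, ← Finset.sum_erase_add _ _ (Finset.mem_univ i), h1, Finset.sum_neg_distrib]
        ring
      have hu1 : u k = 0 := by norm_num [hu, h2]
      have hv1 : v k = ∏ j ∈ Finset.univ.erase i,
          ENNReal.ofReal (exp (l * -(a j * x (k, j)))) := by
        simp [hv, h1]
      rw [hsum, Finset.mul_sum, Real.exp_sum,
        ENNReal.ofReal_prod_of_nonneg (fun j _ => (Real.exp_pos _).le), hu1, hv1, zero_add]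
  calc ENNReal.ofReal (exp (l * ∑ k, ((∑ j, a j * x (k, j)) * x (k, i) - a i)))
      = ∏ k, ENNReal.ofReal (exp (l * ((∑ j, a j * x (k, j)) * x (k, i) - a i))) := by
        rw [Finset.mul_sum, Real.exp_sum,
          ENNReal.ofReal_prod_of_nonneg (fun k _ => (Real.exp_pos _).le)]
    _ = ∏ k, (u k + v k) := Finset.prod_congr rfl fun k _ => key k
    _ = ∑ s : Finset (Fin N), (∏ k ∈ s, u k) * ∏ k ∈ sᶜ, v k := Fintype.prod_add u v
    _ = ∑ s : Finset (Fin N), ∏ p : Fin N × Fin n, Fc i a l s p (x p) := by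
        refine Finset.sum_congr rfl fun s _ => ?_
        have step1 : ∏ p : Fin N × Fin n, Fc i a l s p (x p)
            = ∏ k, ∏ j, Fc i a l s (k, j) (x (k, j)) := Fintype.prod_prod_type _
        have step2 : ∀ k, ∏ j, Fc i a l s (k, j) (x (k, j))
            = if k ∈ s then u k else v k := by
          intro k
          rw [← Finset.mul_prod_erase Finset.univ _ (Finset.mem_univ i)]
          have hi : Fc i a l s (k, i) (x (k, i))
              = if x (k, i) = (if k ∈ s then (1:ℝ) else -1) then 1 else 0 := by
            unfold Fc
            simp
          have hj : ∀ j ∈ Finset.univ.erase i, Fc i a l s (k, j) (x (k, j))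
              = ENNReal.ofReal (exp ((if k ∈ s then l else -l) * a j * x (k, j))) := by
            intro j hjmem
            have hne : j ≠ i := Finset.ne_of_mem_erase hjmem
            unfold Fc
            simp [hne]
          rw [hi, Finset.prod_congr rfl hj]
          by_cases hk : k ∈ s
          · simp only [hk, if_pos rfl, hu, if_true]
            congr 1
            exact Finset.prod_congr rfl fun j _ => by rw [show l * a j * x (k, j)
              = l * (a j * x (k, j)) by ring]
          · simp only [hk, if_false, hv, if_neg hk]
            congr 1
            exact Finset.prod_congr rfl fun j _ => by rw [show -l * a j * x (k, j)
              = l * -(a j * x (k, j)) by ring]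
        rw [step1, Finset.prod_congr rfl (fun k _ => step2 k), ← Finset.prod_mul_prod_compl s]
        congr 1
        · exact Finset.prod_congr rfl fun k hk => by simp [hk]
        · exact Finset.prod_congr rfl fun k hk => by simp [Finset.mem_compl.mp hk]

lemma half_exp_add (A B : ℝ) : (2⁻¹ : ℝ≥0∞) * ENNReal.ofReal (exp A)
    + 2⁻¹ * ENNReal.ofReal (exp B) = ENNReal.ofReal ((exp A + exp B) / 2) := by
  rw [ENNReal.ofReal_div_of_pos (by norm_num), ENNReal.ofReal_add (exp_pos A).le (exp_pos B).le,
    ENNReal.ofReal_ofNat, ENNReal.div_eq_inv_mul, mul_add]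

lemma mgf_bound {Ω : Type*} [MeasurableSpace Ω] (μ : Measure Ω) [IsProbabilityMeasure μ]
    {n N : ℕ} (w : Fin N → Fin n → Ω → ℝ)
    (hmeas : ∀ k i, Measurable (w k i))
    (hdist : ∀ k i, Measure.map (w k i) μ = rademacherMeasure)
    (hindep : iIndepFun (fun p : Fin N × Fin n => w p.1 p.2) μ)
    (i : Fin n) (a : Fin n → ℝ) (l : ℝ) :
    ∫⁻ ω, ENNReal.ofReal (exp (l * ∑ k, ((∑ j, a j * w k j ω) * w k i ω - a i))) ∂μ
      ≤ ENNReal.ofReal (exp ((N : ℝ) * (l ^ 2 * (∑ j ∈ Finset.univ.erase i, a j ^ 2) / 2))) := by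
  classical
  have hae : ∀ᵐ ω ∂μ, ∀ p : Fin N × Fin n, w p.1 p.2 ω = 1 ∨ w p.1 p.2 ω = -1 := by
    rw [MeasureTheory.ae_all_iff]
    intro p
    have hms : MeasurableSet ({1, -1} : Set ℝ) :=
      (measurableSet_singleton 1).union (measurableSet_singleton (-1))
    have h0 : μ ((w p.1 p.2) ⁻¹' ({1, -1} : Set ℝ)ᶜ) = 0 := by
      rw [← Measure.map_apply (hmeas p.1 p.2) hms.compl, hdist p.1 p.2, rademacher_compl]
    rw [ae_iff]
    refine measure_mono_null ?_ h0
    intro ω hω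
    simp only [Set.mem_setOf_eq, not_or] at hω
    simp [Set.mem_preimage, hω.1, hω.2]
  have heq : ∀ᵐ ω ∂μ,
      ENNReal.ofReal (exp (l * ∑ k, ((∑ j, a j * w k j ω) * w k i ω - a i)))
      = ∑ s : Finset (Fin N), ∏ p : Fin N × Fin n, Fc i a l s p (w p.1 p.2 ω) := by
    filter_upwards [hae] with ω hω
    exact pointwise_identity i a l (fun p => w p.1 p.2 ω) hω
  rw [lintegral_congr_ae heq, lintegral_finset_sum
    (f := fun s ω => ∏ p : Fin N × Fin n, Fc i a l s p (w p.1 p.2 ω)) _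
    (fun s _ => Finset.measurable_prod _ fun p _ => (Fc_meas i a l s p).comp (hmeas p.1 p.2))]
  set C : ℝ≥0∞ := ∏ j ∈ Finset.univ.erase i, ENNReal.ofReal (cosh (l * a j)) with hC
  have hterm : ∀ s : Finset (Fin N),
      ∫⁻ ω, ∏ p : Fin N × Fin n, Fc i a l s p (w p.1 p.2 ω) ∂μ = (2⁻¹ * C) ^ N := by
    intro s
    have hGm : ∀ p : Fin N × Fin n, Measurable (fun ω => Fc i a l s p (w p.1 p.2 ω)) :=
      fun p => (Fc_meas i a l s p).comp (hmeas p.1 p.2)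
    have hGind : iIndepFun
        (fun p : Fin N × Fin n => fun ω => Fc i a l s p (w p.1 p.2 ω)) μ :=
      hindep.comp _ (fun p => Fc_meas i a l s p)
    rw [lintegral_prod_indep hGm hGind Finset.univ]
    have hsingle : ∀ p : Fin N × Fin n, ∫⁻ ω, Fc i a l s p (w p.1 p.2 ω) ∂μ
        = 2⁻¹ * Fc i a l s p 1 + 2⁻¹ * Fc i a l s p (-1) := by
      intro p
      rw [← MeasureTheory.lintegral_map (Fc_meas i a l s p) (hmeas p.1 p.2), hdist p.1 p.2,
        lintegral_rademacher]
    have hval : ∀ p : Fin N × Fin n, 2⁻¹ * Fc i a l s p 1 + 2⁻¹ * Fc i a l s p (-1)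
        = if p.2 = i then 2⁻¹ else ENNReal.ofReal (cosh (l * a p.2)) := by
      intro p
      unfold Fc
      rcases eq_or_ne p.2 i with h | h
      · simp only [h, ite_true]
        by_cases hk : p.1 ∈ s <;> norm_num [hk]
      · simp only [h, ite_false]
        by_cases hk : p.1 ∈ s <;> simp only [hk, ite_true, ite_false] <;>
          rw [half_exp_add, cosh_eq]
        · norm_num
        · rw [show -l * a p.2 * 1 = -(l * a p.2) by ring,
            show -l * a p.2 * -1 = l * a p.2 by ring, add_comm]
    calc ∏ p : Fin N × Fin n, ∫⁻ ω, Fc i a l s p (w p.1 p.2 ω) ∂μ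
        = ∏ p : Fin N × Fin n, (if p.2 = i then 2⁻¹
            else ENNReal.ofReal (cosh (l * a p.2))) := by
          exact Finset.prod_congr rfl fun p _ => by rw [hsingle p, hval p]
      _ = ∏ k : Fin N, ∏ j : Fin n, (if j = i then 2⁻¹
            else ENNReal.ofReal (cosh (l * a j))) := Fintype.prod_prod_type _
      _ = ∏ _k : Fin N, (2⁻¹ * C) := by
          refine Finset.prod_congr rfl fun k _ => ?_
          rw [← Finset.mul_prod_erase Finset.univ _ (Finset.mem_univ i), if_pos rfl, hC]
          congr 1
          exact Finset.prod_congr rfl fun j hj => by rw [if_neg (Finset.ne_of_mem_erase hj)]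
      _ = (2⁻¹ * C) ^ N := by rw [Finset.prod_const, Finset.card_univ, Fintype.card_fin]
  rw [Finset.sum_congr rfl fun s _ => hterm s, Finset.sum_const, Finset.card_univ,
    Fintype.card_finset, Fintype.card_fin, nsmul_eq_mul, Nat.cast_pow, Nat.cast_ofNat,
    ← mul_pow, ← mul_assoc, ENNReal.mul_inv_cancel (by norm_num) (by norm_num), one_mul]
  have hCle : C ≤ ENNReal.ofReal (exp (l ^ 2 * (∑ j ∈ Finset.univ.erase i, a j ^ 2) / 2)) := by
    calc C ≤ ∏ j ∈ Finset.univ.erase i, ENNReal.ofReal (exp ((l * a j) ^ 2 / 2)) :=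
          Finset.prod_le_prod' fun j _ =>
            ENNReal.ofReal_le_ofReal (Real.cosh_le_exp_half_sq _)
      _ = ENNReal.ofReal (∏ j ∈ Finset.univ.erase i, exp ((l * a j) ^ 2 / 2)) :=
          (ENNReal.ofReal_prod_of_nonneg fun j _ => (exp_pos _).le).symm
      _ = ENNReal.ofReal (exp (∑ j ∈ Finset.univ.erase i, (l * a j) ^ 2 / 2)) := by
          rw [Real.exp_sum]
      _ = ENNReal.ofReal (exp (l ^ 2 * (∑ j ∈ Finset.univ.erase i, a j ^ 2) / 2)) := by
          have hs : ∑ j ∈ Finset.univ.erase i, (l * a j) ^ 2 / 2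
              = l ^ 2 * (∑ j ∈ Finset.univ.erase i, a j ^ 2) / 2 := by
            rw [Finset.mul_sum, Finset.sum_div]
            exact Finset.sum_congr rfl fun j _ => by ring
          rw [hs]
  calc C ^ N
      ≤ ENNReal.ofReal (exp (l ^ 2 * (∑ j ∈ Finset.univ.erase i, a j ^ 2) / 2)) ^ N :=
        pow_le_pow_left₀ (zero_le (a := C)) hCle N
    _ = ENNReal.ofReal (exp (l ^ 2 * (∑ j ∈ Finset.univ.erase i, a j ^ 2) / 2) ^ N) :=
        (ENNReal.ofReal_pow (exp_pos _).le _).symm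
    _ = ENNReal.ofReal (exp ((N : ℝ) * (l ^ 2 * (∑ j ∈ Finset.univ.erase i, a j ^ 2) / 2))) := by
        rw [← Real.exp_nat_mul]

lemma chernoff_side {Ω : Type*} [MeasurableSpace Ω] (μ : Measure Ω) [IsProbabilityMeasure μ]
    {n N : ℕ} (w : Fin N → Fin n → Ω → ℝ)
    (hmeas : ∀ k i, Measurable (w k i))
    (hdist : ∀ k i, Measure.map (w k i) μ = rademacherMeasure)
    (hindep : iIndepFun (fun p : Fin N × Fin n => w p.1 p.2) μ)
    (i : Fin n) (a : Fin n → ℝ) (t : ℝ) (ht : 0 < t)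
    (hσ : 0 < ∑ j ∈ Finset.univ.erase i, a j ^ 2) :
    μ {ω | (N : ℝ) * t ≤ ∑ k, ((∑ j, a j * w k j ω) * w k i ω - a i)}
      ≤ ENNReal.ofReal (exp (-((N : ℝ) * t ^ 2)
          / (2 * ∑ j ∈ Finset.univ.erase i, a j ^ 2))) := by
  set σ2 := ∑ j ∈ Finset.univ.erase i, a j ^ 2 with hσ2
  set l := t / σ2 with hl
  have hl0 : 0 ≤ l := (div_pos ht hσ).le
  have hGmeas : Measurable fun ω => ∑ k, ((∑ j, a j * w k j ω) * w k i ω - a i) := by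
    apply Finset.measurable_sum
    intro k _
    exact ((Finset.measurable_sum _ fun j _ =>
      (measurable_const.mul (hmeas k j))).mul (hmeas k i)).sub measurable_const
  set G := fun ω => ∑ k, ((∑ j, a j * w k j ω) * w k i ω - a i) with hG
  set ε := ENNReal.ofReal (exp (l * ((N : ℝ) * t))) with hε
  have hsub : {ω | (N : ℝ) * t ≤ G ω}
      ⊆ {ω | ε ≤ ENNReal.ofReal (exp (l * G ω))} := fun ω hω =>
    ENNReal.ofReal_le_ofReal (exp_le_exp.mpr (mul_le_mul_of_nonneg_left hω hl0))
  have hfm : AEMeasurable (fun ω => ENNReal.ofReal (exp (l * G ω))) μ :=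
    (ENNReal.measurable_ofReal.comp
      (Real.measurable_exp.comp (measurable_const.mul hGmeas))).aemeasurable
  have markov := mul_meas_ge_le_lintegral₀ hfm ε
  have hchain : ε * μ {ω | (N : ℝ) * t ≤ G ω}
      ≤ ENNReal.ofReal (exp ((N : ℝ) * (l ^ 2 * σ2 / 2))) :=
    le_trans (mul_le_mul_right (measure_mono hsub) ε)
      (le_trans markov (mgf_bound μ w hmeas hdist hindep i a l))
  have hε0 : ε ≠ 0 := by simp [hε, ENNReal.ofReal_eq_zero, not_le, exp_pos]
  have hεtop : ε ≠ ⊤ := ENNReal.ofReal_ne_top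
  have step : μ {ω | (N : ℝ) * t ≤ G ω}
      ≤ ε⁻¹ * ENNReal.ofReal (exp ((N : ℝ) * (l ^ 2 * σ2 / 2))) := by
    calc μ {ω | (N : ℝ) * t ≤ G ω}
        = ε⁻¹ * (ε * μ {ω | (N : ℝ) * t ≤ G ω}) := by
          rw [← mul_assoc, ENNReal.inv_mul_cancel hε0 hεtop, one_mul]
      _ ≤ ε⁻¹ * ENNReal.ofReal (exp ((N : ℝ) * (l ^ 2 * σ2 / 2))) :=
          mul_le_mul_right hchain _
  refine le_trans step (le_of_eq ?_)
  rw [hε, ← ENNReal.ofReal_inv_of_pos (exp_pos _), ← Real.exp_neg,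
    ← ENNReal.ofReal_mul (exp_pos _).le, ← Real.exp_add]
  congr 1
  have hσ2ne : σ2 ≠ 0 := hσ.ne'
  rw [hl]
  field_simp
  ring

/-- Componentwise tail bound for the Rademacher Monte Carlo diagonal estimator:
`P[|Â_{ii} - a_{ii}| ≥ t] ≤ 2 exp(-N t² / (2(‖a_i‖₂² - a_{ii}²)))`. -/
theorem rademacher_componentwise_tail {Ω : Type*} [MeasurableSpace Ω]
    (μ : Measure Ω) [IsProbabilityMeasure μ] {n N : ℕ} (hN : 0 < N)
    (A : Matrix (Fin n) (Fin n) ℝ) (hsym : A.IsSymm)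
    (hnd : ∃ i j, i ≠ j ∧ A i j ≠ 0)
    (w : Fin N → Fin n → Ω → ℝ)
    (hmeas : ∀ k i, Measurable (w k i))
    (hdist : ∀ k i, Measure.map (w k i) μ = rademacherMeasure)
    (hindep : iIndepFun
      (fun p : Fin N × Fin n => w p.1 p.2) μ)
    (i : Fin n) (t : ℝ) (ht : 0 < t) :
    μ {ω | t ≤ |(N : ℝ)⁻¹ * (∑ k, (∑ j, A i j * w k j ω) * w k i ω) - A i i|}
      ≤ ENNReal.ofReal (2 * Real.exp (-((N : ℝ) * t^2)
          / (2 * ((∑ j, (A i j)^2) - (A i i)^2)))) := by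
    classical
  have hsplit : (∑ j, (A i j) ^ 2) - (A i i) ^ 2
      = ∑ j ∈ Finset.univ.erase i, (A i j) ^ 2 := by
    rw [← Finset.sum_erase_add Finset.univ _ (Finset.mem_univ i)]
    ring
  have hσnn : 0 ≤ ∑ j ∈ Finset.univ.erase i, (A i j) ^ 2 :=
    Finset.sum_nonneg fun j _ => sq_nonneg _
  rcases (hσnn.eq_or_lt).imp Eq.symm id with hσ0 | hσpos
  · -- degenerate case: bound is ofReal 2 ≥ 1
    rw [hsplit, hσ0, mul_zero]
    refine le_trans prob_le_one ?_
    norm_num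
  · rw [hsplit]
    have hNne : (N : ℝ) ≠ 0 := Nat.cast_ne_zero.mpr hN.ne'
    set G : Ω → ℝ := fun ω => ∑ k, ((∑ j, A i j * w k j ω) * w k i ω - A i i) with hG
    have hGeq : ∀ ω, (N : ℝ)⁻¹ * (∑ k, (∑ j, A i j * w k j ω) * w k i ω) - A i i
        = (N : ℝ)⁻¹ * G ω := by
      intro ω
      simp only [hG]
      rw [Finset.sum_sub_distrib, Finset.sum_const, Finset.card_univ, Fintype.card_fin,
        mul_sub, nsmul_eq_mul, ← mul_assoc, inv_mul_cancel₀ hNne, one_mul]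
    have hsub : {ω | t ≤ |(N : ℝ)⁻¹ * (∑ k, (∑ j, A i j * w k j ω) * w k i ω) - A i i|}
        ⊆ {ω | (N : ℝ) * t ≤ G ω} ∪ {ω | (N : ℝ) * t ≤ -G ω} := by
      intro ω hω
      simp only [Set.mem_setOf_eq] at hω ⊢
      rw [hGeq ω, abs_mul, abs_inv, abs_of_pos (by positivity : (0:ℝ) < (N:ℝ))] at hω
      have hNt : (N : ℝ) * t ≤ |G ω| := by
        have h2 := mul_le_mul_of_nonneg_left hω (by positivity : (0:ℝ) ≤ (N:ℝ))
        rwa [← mul_assoc, mul_inv_cancel₀ hNne, one_mul] at h2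
      rcases abs_cases (G ω) with ⟨he, _⟩ | ⟨he, _⟩
      · left; rwa [he] at hNt
      · right; rwa [he] at hNt
    have hplus : μ {ω | (N : ℝ) * t ≤ G ω}
        ≤ ENNReal.ofReal (exp (-((N : ℝ) * t ^ 2)
            / (2 * ∑ j ∈ Finset.univ.erase i, (A i j) ^ 2))) :=
      chernoff_side μ w hmeas hdist hindep i (A i) t ht hσpos
    have hminusσ : (0:ℝ) < ∑ j ∈ Finset.univ.erase i, (-(A i j)) ^ 2 := by
      simpa [neg_sq] using hσpos
    have hneg : ∀ ω, -G ω = ∑ k, ((∑ j, (-(A i j)) * w k j ω) * w k i ω - (-(A i i))) := by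
      intro ω
      simp only [hG]
      rw [← Finset.sum_neg_distrib]
      refine Finset.sum_congr rfl fun k _ => ?_
      have hinner : ∑ j, (-(A i j)) * w k j ω = -∑ j, A i j * w k j ω := by
        rw [← Finset.sum_neg_distrib]
        exact Finset.sum_congr rfl fun j _ => by ring
      rw [hinner]
      ring
    have hmeq : {ω | (N : ℝ) * t ≤ -G ω}
        = {ω | (N : ℝ) * t ≤ ∑ k, ((∑ j, (-(A i j)) * w k j ω) * w k i ω - (-(A i i)))} := by
      ext ω
      simp only [Set.mem_setOf_eq, hneg ω]
    have hminus : μ {ω | (N : ℝ) * t ≤ -G ω}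
        ≤ ENNReal.ofReal (exp (-((N : ℝ) * t ^ 2)
            / (2 * ∑ j ∈ Finset.univ.erase i, (A i j) ^ 2))) := by
      rw [hmeq]
      have := chernoff_side μ w hmeas hdist hindep i (fun j => -(A i j)) t ht hminusσ
      simpa [neg_sq] using this
    calc μ {ω | t ≤ |(N : ℝ)⁻¹ * (∑ k, (∑ j, A i j * w k j ω) * w k i ω) - A i i|}
        ≤ μ ({ω | (N : ℝ) * t ≤ G ω} ∪ {ω | (N : ℝ) * t ≤ -G ω}) := measure_mono hsub
      _ ≤ μ {ω | (N : ℝ) * t ≤ G ω} + μ {ω | (N : ℝ) * t ≤ -G ω} := measure_union_le _ _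
      _ ≤ ENNReal.ofReal (exp (-((N : ℝ) * t ^ 2)
            / (2 * ∑ j ∈ Finset.univ.erase i, (A i j) ^ 2)))
          + ENNReal.ofReal (exp (-((N : ℝ) * t ^ 2)
            / (2 * ∑ j ∈ Finset.univ.erase i, (A i j) ^ 2))) := add_le_add hplus hminus
      _ = ENNReal.ofReal (2 * exp (-((N : ℝ) * t ^ 2)
            / (2 * ∑ j ∈ Finset.univ.erase i, (A i j) ^ 2))) := by
          rw [← ENNReal.ofReal_add (exp_pos _).le (exp_pos _).le, ← two_mul]
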